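/- Let τ > τ₁ (where τ₁ tanh τ₁ = 1) and let ν > 0 satisfy tanh ν = ν/(τ tanh τ). Then φ(x) = ν cosh(ν x) − τ sinh(ν x) tanh(τ x) satisfies φ'' + λ e^u φ − ν² φ = 0 on (-1,1), φ(±1) = 0, and φ(x) > 0 for −1 < x < 1, where λ = 2τ²/cosh²τ and u(x) = 2 log(cosh τ/cosh(τ x)). -/

import Mathlib

set_option maxHeartbeats 800000


open Real Set

private lemma tanh_lt_tanh_of_lt {a b : ℝ} (ha : 0 ≤ a) (hab : a < b) :
    Real.tanh a < Real.tanh b := by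
  rw [Real.tanh_eq_sinh_div_cosh, Real.tanh_eq_sinh_div_cosh,
    div_lt_div_iff₀ (Real.cosh_pos a) (Real.cosh_pos b)]
  have h : Real.sinh (a - b) < 0 := Real.sinh_neg_iff.2 (by linarith)
  rw [Real.sinh_sub] at h
  linarith

private lemma tanh_nonneg' {a : ℝ} (ha : 0 ≤ a) : 0 ≤ Real.tanh a := by
  rw [Real.tanh_eq_sinh_div_cosh]
  exact div_nonneg (by simpa using Real.sinh_le_sinh.2 ha) (Real.cosh_pos a).le

private lemma hasDerivAt_sinh_mul (c x : ℝ) :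
    HasDerivAt (fun x => Real.sinh (c * x)) (c * Real.cosh (c * x)) x := by
  simpa [mul_comm, Function.comp_def] using (Real.hasDerivAt_sinh (c * x)).comp x
    ((hasDerivAt_id x).const_mul c)

private lemma hasDerivAt_cosh_mul (c x : ℝ) :
    HasDerivAt (fun x => Real.cosh (c * x)) (c * Real.sinh (c * x)) x := by
  simpa [mul_comm, Function.comp_def] using (Real.hasDerivAt_cosh (c * x)).comp x
    ((hasDerivAt_id x).const_mul c)

private lemma hasDerivAt_tanh_mul (c x : ℝ) :
    HasDerivAt (fun x => Real.tanh (c * x)) (c / Real.cosh (c * x) ^ 2) x := by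
  have h : ∀ y, Real.tanh (c * y) = Real.sinh (c * y) / Real.cosh (c * y) := fun y =>
    Real.tanh_eq_sinh_div_cosh _
  simp only [h]
  have := (hasDerivAt_sinh_mul c x).fun_div (hasDerivAt_cosh_mul c x)
    (Real.cosh_pos (c * x)).ne'
  refine this.congr_deriv ?_
  symm
  have h2 := Real.cosh_sq_sub_sinh_sq (c * x)
  field_simp
  linear_combination -c * h2

theorem eigenfunction_negative_eigenvalue (τ₁ τ ν : ℝ) (hτ₁ : 0 < τ₁)
    (h1 : τ₁ * Real.tanh τ₁ = 1) (hτ : τ₁ < τ) (hν : 0 < ν)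
    (hνeq : Real.tanh ν = ν / (τ * Real.tanh τ))
    (lam : ℝ) (hlam : lam = 2 * τ ^ 2 / Real.cosh τ ^ 2)
    (u : ℝ → ℝ) (hu : ∀ x, u x = 2 * Real.log (Real.cosh τ / Real.cosh (τ * x)))
    (φ : ℝ → ℝ)
    (hφ : ∀ x, φ x = ν * Real.cosh (ν * x) - τ * Real.sinh (ν * x) * Real.tanh (τ * x)) :
    (∀ x ∈ Set.Ioo (-1 : ℝ) 1,
      deriv (deriv φ) x + lam * Real.exp (u x) * φ x - ν ^ 2 * φ x = 0) ∧
    φ (-1) = 0 ∧ φ 1 = 0 ∧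
    (∀ x ∈ Set.Ioo (-1 : ℝ) 1, 0 < φ x) := by
  have hτ0 : 0 < τ := hτ₁.trans hτ
  have htτ : 0 < Real.tanh τ := by
    have := tanh_lt_tanh_of_lt le_rfl hτ0
    simpa [Real.tanh_eq_sinh_div_cosh] using this
  -- key relation: ν * cosh ν = τ * tanh τ * sinh ν
  have hkey : τ * Real.tanh τ * Real.tanh ν = ν := by
    field_simp at hνeq
    linarith [hνeq]
  have hφfun : φ = fun x =>
      ν * Real.cosh (ν * x) - τ * Real.sinh (ν * x) * Real.tanh (τ * x) := funext hφ
  -- first derivative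
  have hd1 : ∀ x, HasDerivAt φ
      (ν ^ 2 * Real.sinh (ν * x) - τ * ν * Real.cosh (ν * x) * Real.tanh (τ * x)
        - τ ^ 2 * Real.sinh (ν * x) / Real.cosh (τ * x) ^ 2) x := by
    intro x
    rw [hφfun]
    have h := ((hasDerivAt_cosh_mul ν x).const_mul ν).fun_sub
      ((((hasDerivAt_sinh_mul ν x).const_mul τ).fun_mul (hasDerivAt_tanh_mul τ x)))
    refine h.congr_deriv ?_
    symm
    have hc := (Real.cosh_pos (τ * x)).ne'
    field_simp
    ring
  have hderiv1 : deriv φ = fun x =>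
      ν ^ 2 * Real.sinh (ν * x) - τ * ν * Real.cosh (ν * x) * Real.tanh (τ * x)
        - τ ^ 2 * Real.sinh (ν * x) / Real.cosh (τ * x) ^ 2 :=
    funext fun x => (hd1 x).deriv
  -- second derivative
  have hd2 : ∀ x, HasDerivAt (deriv φ)
      (ν ^ 3 * Real.cosh (ν * x) - τ * ν ^ 2 * Real.sinh (ν * x) * Real.tanh (τ * x)
        - 2 * τ ^ 2 * ν * Real.cosh (ν * x) / Real.cosh (τ * x) ^ 2
        + 2 * τ ^ 3 * Real.sinh (ν * x) * Real.sinh (τ * x) / Real.cosh (τ * x) ^ 3) x := by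
    intro x
    rw [hderiv1]
    have hc := (Real.cosh_pos (τ * x)).ne'
    have hA : HasDerivAt (fun x => ν ^ 2 * Real.sinh (ν * x))
        (ν ^ 2 * (ν * Real.cosh (ν * x))) x := (hasDerivAt_sinh_mul ν x).const_mul _
    have hB : HasDerivAt (fun x => τ * ν * Real.cosh (ν * x) * Real.tanh (τ * x))
        ((τ * ν * (ν * Real.sinh (ν * x))) * Real.tanh (τ * x)
          + (τ * ν * Real.cosh (ν * x)) * (τ / Real.cosh (τ * x) ^ 2)) x :=
      (((hasDerivAt_cosh_mul ν x).const_mul (τ * ν)).mul (hasDerivAt_tanh_mul τ x))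
    have hC : HasDerivAt (fun x => τ ^ 2 * Real.sinh (ν * x) / Real.cosh (τ * x) ^ 2)
        (((τ ^ 2 * (ν * Real.cosh (ν * x))) * Real.cosh (τ * x) ^ 2
          - τ ^ 2 * Real.sinh (ν * x) * (2 * Real.cosh (τ * x) * (τ * Real.sinh (τ * x))))
          / (Real.cosh (τ * x) ^ 2) ^ 2) x := by
      have hden : HasDerivAt (fun x => Real.cosh (τ * x) ^ 2)
          (2 * Real.cosh (τ * x) * (τ * Real.sinh (τ * x))) x := by
        have := (hasDerivAt_cosh_mul τ x).fun_pow 2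
        simpa [mul_comm, mul_assoc, mul_left_comm] using this
      exact ((hasDerivAt_sinh_mul ν x).const_mul (τ ^ 2)).div hden (by positivity)
    have h := (hA.fun_sub hB).fun_sub hC
    refine h.congr_deriv ?_
    symm
    rw [Real.tanh_eq_sinh_div_cosh]
    field_simp
    ring
  constructor
  · intro x _
    have hc := (Real.cosh_pos (τ * x)).ne'
    have hcτ := (Real.cosh_pos τ).ne'
    have hexp : Real.exp (u x) = (Real.cosh τ / Real.cosh (τ * x)) ^ 2 := by
      rw [hu x, show (2:ℝ) * Real.log (Real.cosh τ / Real.cosh (τ * x))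
          = Real.log ((Real.cosh τ / Real.cosh (τ * x)) ^ 2) by
            rw [Real.log_pow]; push_cast; ring]
      exact Real.exp_log (by positivity)
    rw [(hd2 x).deriv, hexp, hlam, hφ x, Real.tanh_eq_sinh_div_cosh]
    field_simp
    ring
  refine ⟨?_, ?_, ?_⟩
  · rw [hφ]
    rw [show ν * (-1 : ℝ) = -ν by ring, show τ * (-1 : ℝ) = -τ by ring,
      Real.cosh_neg, Real.sinh_neg, Real.tanh_neg]
    have : ν * Real.cosh ν = τ * Real.tanh τ * Real.sinh ν := by
      have := hkey
      rw [Real.tanh_eq_sinh_div_cosh ν] at this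
      field_simp at this
      nlinarith [Real.cosh_pos ν]
    nlinarith [this]
  · rw [hφ]
    have : ν * Real.cosh ν = τ * Real.tanh τ * Real.sinh ν := by
      have := hkey
      rw [Real.tanh_eq_sinh_div_cosh ν] at this
      field_simp at this
      nlinarith [Real.cosh_pos ν]
    simp only [mul_one]
    nlinarith [this]
  · intro x hx
    obtain ⟨hx1, hx2⟩ := hx
    -- φ is even; reduce to |x|
    have habs : φ x = ν * Real.cosh (ν * |x|) - τ * Real.sinh (ν * |x|) * Real.tanh (τ * |x|) := by
      rw [hφ]
      rcases abs_cases x with ⟨h, _⟩ | ⟨h, _⟩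
      · rw [h]
      · rw [h]
        rw [show ν * -x = -(ν * x) by ring, show τ * -x = -(τ * x) by ring,
          Real.cosh_neg, Real.sinh_neg, Real.tanh_neg]
        ring
    set y := |x| with hy
    have hy0 : 0 ≤ y := abs_nonneg x
    have hy1 : y < 1 := abs_lt.2 ⟨hx1, hx2⟩
    clear_value y
    rw [habs]
    have hchpos := Real.cosh_pos (ν * y)
    -- suffices τ * tanh(νy) * tanh(τy) < ν
    have hkey2 : τ * Real.tanh (ν * y) * Real.tanh (τ * y) < ν := by
      have ht1 : Real.tanh (ν * y) < Real.tanh ν :=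
        tanh_lt_tanh_of_lt (by positivity) (by nlinarith)
      have ht2 : Real.tanh (τ * y) ≤ Real.tanh τ := by
        rcases eq_or_lt_of_le (by nlinarith : τ * y ≤ τ) with h | h
        · rw [h]
        · exact (tanh_lt_tanh_of_lt (by positivity) h).le
      have hn1 : 0 ≤ Real.tanh (ν * y) := tanh_nonneg' (by positivity)
      have hn2 : 0 ≤ Real.tanh (τ * y) := tanh_nonneg' (by positivity)
      calc τ * Real.tanh (ν * y) * Real.tanh (τ * y)
          ≤ τ * Real.tanh (ν * y) * Real.tanh τ := by
            nlinarith [mul_nonneg (mul_nonneg hτ0.le hn1) (sub_nonneg.2 ht2)]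
        _ < τ * Real.tanh ν * Real.tanh τ := by
            nlinarith [mul_pos (mul_pos hτ0 htτ) (sub_pos.2 ht1)]
        _ = ν := by linear_combination hkey
    have hsinh : Real.sinh (ν * y) = Real.tanh (ν * y) * Real.cosh (ν * y) := by
      rw [Real.tanh_eq_sinh_div_cosh, div_mul_cancel₀ _ (Real.cosh_pos _).ne']
    rw [hsinh]
    have h := mul_lt_mul_of_pos_left hkey2 hchpos
    clear hd1 hd2 hderiv1 hφfun hφ hu hνeq hlam h1 hkey hkey2 habs hsinh
    nlinarith [h]
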